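/- Let G = C(α_1,…,α_{2k}) be a C-graph with adjacency matrix A, and let m(G) denote the number of distinct real eigenvalues of A. Then m(G) ≤ 2k + 2. -/

import Mathlib

open Matrix BigOperators
open scoped Classical

/-- The equivalence splitting off the last cell of `Σ j : Fin (m+1), Fin (α j)`. -/
def splitLast (α : ℕ → ℕ) (m : ℕ) :
    (Σ j : Fin (m + 1), Fin (α j.val)) ≃ (Σ j : Fin m, Fin (α j.val)) ⊕ Fin (α m) where
  toFun x :=
    if h : x.1.val < m then Sum.inl ⟨⟨x.1.val, h⟩, x.2⟩
    else Sum.inr (Fin.cast (congrArg α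
      (Nat.le_antisymm (Nat.lt_succ_iff.mp x.1.isLt) (Nat.le_of_not_lt h))) x.2)
  invFun x :=
    match x with
    | Sum.inl y => ⟨⟨y.1.val, Nat.lt_succ_of_lt y.1.isLt⟩, y.2⟩
    | Sum.inr a => ⟨⟨m, Nat.lt_succ_self m⟩, a⟩
  left_inv := by
    rintro ⟨⟨jv, hj⟩, a⟩
    by_cases h : jv < m
    · simp [h]
    · have hm : jv = m := Nat.le_antisymm (Nat.lt_succ_iff.mp hj) (Nat.le_of_not_lt h)
      subst hm
      simp [h, Fin.cast]
  right_inv := by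
    rintro (⟨⟨jv, hj⟩, a⟩ | a)
    · simp [hj]
    · simp [Fin.cast]

/-- The cograph `C(α 0, α 1, …, α (m-1))` (1-indexed in the paper: `C(α_1,…,α_m)`),
defined recursively: `C(α_1)` is the complement of the complete graph `K_{α_1}`, and
`C(α_1,…,α_i)` is the complement of the disjoint union of `C(α_1,…,α_{i-1})` and `K_{α_i}`.
The vertices added at step `j` (the cell `C_j`) are the pairs `⟨j, a⟩`. -/
def cographC (α : ℕ → ℕ) : (m : ℕ) → SimpleGraph (Σ j : Fin m, Fin (α j.val))
  | 0 => ⊥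
  | m + 1 =>
      SimpleGraph.comap (splitLast α m)
        ((cographC α m ⊕g (⊤ : SimpleGraph (Fin (α m))))ᶜ)

/-- The real adjacency matrix of a finite simple graph. -/
noncomputable def adjMat {V : Type*} [Fintype V] (G : SimpleGraph V) : Matrix V V ℝ :=
  Matrix.of fun u v => if G.Adj u v then (1 : ℝ) else 0


open Polynomial in

lemma eval_charpoly' {n : Type*} [Fintype n] [DecidableEq n] (M : Matrix n n ℝ) (x : ℝ) :
    M.charpoly.eval x = (Matrix.diagonal (fun _ => x) - M).det := by
  rw [Matrix.charpoly, ← Polynomial.coe_evalRingHom, RingHom.map_det]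
  congr 1
  ext i j
  by_cases h : i = j
  · subst h
    simp [charmatrix_apply_eq]
  · simp [charmatrix_apply_ne _ _ _ h, Matrix.diagonal_apply_ne _ h]

lemma exists_eigvec {n : Type*} [Fintype n] [DecidableEq n] (M : Matrix n n ℝ) {x : ℝ}
    (hx : M.charpoly.eval x = 0) : ∃ v : n → ℝ, v ≠ 0 ∧ M.mulVec v = x • v := by
  rw [eval_charpoly'] at hx
  obtain ⟨v, hv0, hv⟩ := (Matrix.exists_mulVec_eq_zero_iff).2 hx
  refine ⟨v, hv0, ?_⟩
  rw [Matrix.sub_mulVec, sub_eq_zero] at hv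
  rw [← hv]
  ext i
  simp [Matrix.mulVec_diagonal]

lemma card_roots_le {n : Type*} [Fintype n] [DecidableEq n] (A : Matrix n n ℝ) :
    A.charpoly.roots.toFinset.card ≤ (A * A + A).rank + 2 := by
  classical
  set B := A * A + A with hB
  set S := A.charpoly.roots.toFinset with hS
  set T := S \ ({0, -1} : Finset ℝ) with hT
  have hST : S.card ≤ T.card + 2 := by
    have h1 : S.card ≤ T.card + ({0, -1} : Finset ℝ).card :=
      Finset.card_le_card_sdiff_add_card
    have h2 : ({0, -1} : Finset ℝ).card ≤ 2 := by
      apply le_trans (Finset.card_insert_le _ _); simp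
    omega
  have hTrank : T.card ≤ B.rank := by
    have hvec : ∀ x : T, ∃ v : n → ℝ, v ≠ 0 ∧ A.mulVec v = (x : ℝ) • v := by
      rintro ⟨x, hx⟩
      have hx' : x ∈ S := (Finset.mem_sdiff.mp hx).1
      rw [hS, Multiset.mem_toFinset] at hx'
      have hch : A.charpoly ≠ 0 := A.charpoly_monic.ne_zero
      exact exists_eigvec A ((Polynomial.mem_roots hch).mp hx')
    choose v hv0 hvA using hvec
    have hne : ∀ x : T, (x : ℝ) ^ 2 + x ≠ 0 := by
      rintro ⟨x, hx⟩
      obtain ⟨-, hx2⟩ := Finset.mem_sdiff.mp hx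
      simp only [Finset.mem_insert, Finset.mem_singleton, not_or] at hx2
      have h0 : x ≠ 0 := hx2.1
      have h1 : x ≠ -1 := hx2.2
      intro hc
      have : x * (x + 1) = 0 := by ring_nf; ring_nf at hc; linarith [hc]
      rcases mul_eq_zero.mp this with h | h
      · exact h0 h
      · exact h1 (by linarith)
    have hmem : ∀ x : T, v x ∈ LinearMap.range B.mulVecLin := by
      intro x
      have hBv : B.mulVec (v x) = ((x : ℝ) ^ 2 + x) • v x := by
        rw [hB, Matrix.add_mulVec, ← Matrix.mulVec_mulVec, hvA, Matrix.mulVec_smul, hvA]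
        ext i
        simp [Pi.smul_apply]
        ring
      refine ⟨((x : ℝ) ^ 2 + x)⁻¹ • v x, ?_⟩
      rw [Matrix.mulVecLin_apply, Matrix.mulVec_smul, hBv, smul_smul,
        inv_mul_cancel₀ (hne x), one_smul]
    have hli : LinearIndependent ℝ v := by
      apply Module.End.eigenvectors_linearIndependent' (A.mulVecLin) (fun x : T => (x : ℝ))
        Subtype.coe_injective
      intro x
      refine ⟨Module.End.mem_eigenspace_iff.mpr ?_, hv0 x⟩
      rw [Matrix.mulVecLin_apply, hvA]
    let W := LinearMap.range B.mulVecLin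
    let v' : T → W := fun x => ⟨v x, hmem x⟩
    have hli' : LinearIndependent ℝ v' := by
      apply LinearIndependent.of_comp W.subtype
      exact hli
    have hcard := hli'.fintype_card_le_finrank
    rw [Fintype.card_coe] at hcard
    exact hcard
  omega

lemma cographC_adj (α : ℕ → ℕ) : ∀ (m : ℕ) (x y : Σ j : Fin m, Fin (α j.val)),
    (cographC α m).Adj x y ↔ x ≠ y ∧ ((x.1 = y.1) ↔ Even (m - max x.1.val y.1.val)) := by
  intro m
  induction m with
  | zero => rintro ⟨⟨_, h⟩, _⟩; exact absurd h (Nat.not_lt_zero _)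
  | succ m ih =>
    intro x y
    have hx' : x.1.val ≤ m := Nat.lt_succ_iff.mp x.1.isLt
    have hy' : y.1.val ≤ m := Nat.lt_succ_iff.mp y.1.isLt
    have hxy : x = y ↔ splitLast α m x = splitLast α m y := (Equiv.apply_eq_iff_eq _).symm
    rw [cographC]
    rw [SimpleGraph.comap_adj, SimpleGraph.compl_adj]
    by_cases hx : x.1.val < m <;> by_cases hy : y.1.val < m
    · -- both in earlier cells
      have hmax : max x.1.val y.1.val < m := max_lt hx hy
      have hstep : m + 1 - max x.1.val y.1.val = (m - max x.1.val y.1.val) + 1 :=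
        Nat.succ_sub (le_of_lt hmax)
      rw [hstep]
      simp only [splitLast, Equiv.coe_fn_mk, hx, hy, dif_pos] at hxy ⊢
      set x' : Σ j : Fin m, Fin (α j.val) := ⟨⟨x.1.val, hx⟩, x.2⟩ with hx'd
      set y' : Σ j : Fin m, Fin (α j.val) := ⟨⟨y.1.val, hy⟩, y.2⟩ with hy'd
      show (Sum.inl x' ≠ Sum.inl y' ∧ ¬(cographC α m).Adj x' y') ↔ _
      rw [ih x' y']
      have h1 : (x'.1 = y'.1) ↔ (x.1 = y.1) := by
        rw [Fin.ext_iff, Fin.ext_iff]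
      have h2 : max x'.1.val y'.1.val = max x.1.val y.1.val := rfl
      rw [h1, h2, Nat.even_add_one]
      simp only [Sum.inl.injEq] at hxy
      simp only [ne_eq, Sum.inl.injEq, ← hxy]
      tauto
    · -- x earlier, y last
      have hyv : y.1.val = m := Nat.le_antisymm hy' (Nat.le_of_not_lt hy)
      have hmax : max x.1.val y.1.val = m := by omega
      have hstep : m + 1 - max x.1.val y.1.val = 1 := by omega
      rw [hmax] at hstep; rw [hmax, hstep]
      simp only [splitLast, Equiv.coe_fn_mk, hx, hy, dif_pos, dif_neg, not_false_iff]
      have hne1 : x.1 ≠ y.1 := fun h => (by omega : ¬ x.1.val = y.1.val) (congrArg Fin.val h)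
      simp only [SimpleGraph.sum_adj]
      constructor
      · intro _
        exact ⟨fun h => hne1 (congrArg Sigma.fst h), iff_of_false hne1 (by decide)⟩
      · intro _
        exact ⟨fun h => Sum.inl_ne_inr h, not_false⟩
    · -- y earlier, x last
      have hxv : x.1.val = m := Nat.le_antisymm hx' (Nat.le_of_not_lt hx)
      have hmax : max x.1.val y.1.val = m := by omega
      have hstep : m + 1 - max x.1.val y.1.val = 1 := by omega
      rw [hmax] at hstep; rw [hmax, hstep]
      simp only [splitLast, Equiv.coe_fn_mk, hx, hy, dif_pos, dif_neg, not_false_iff]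
      have hne1 : x.1 ≠ y.1 := fun h => (by omega : ¬ x.1.val = y.1.val) (congrArg Fin.val h)
      simp only [SimpleGraph.sum_adj]
      constructor
      · intro _
        exact ⟨fun h => hne1 (congrArg Sigma.fst h), iff_of_false hne1 (by decide)⟩
      · intro _
        exact ⟨fun h => Sum.inr_ne_inl h, not_false⟩
    · -- both last
      have hxv : x.1.val = m := Nat.le_antisymm hx' (Nat.le_of_not_lt hx)
      have hyv : y.1.val = m := Nat.le_antisymm hy' (Nat.le_of_not_lt hy)
      have hmax : max x.1.val y.1.val = m := by omega
      have hstep : m + 1 - max x.1.val y.1.val = 1 := by omega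
      rw [hmax] at hstep; rw [hmax, hstep]
      simp only [splitLast, Equiv.coe_fn_mk, hx, hy, dif_neg, not_false_iff]
      have heq1 : x.1 = y.1 := Fin.ext (by omega)
      simp only [SimpleGraph.sum_adj, SimpleGraph.top_adj]
      constructor
      · rintro ⟨h1, h2⟩
        exact absurd (fun h => h1 (congrArg Sum.inr h)) h2
      · rintro ⟨-, h⟩
        exact absurd (h.mp heq1) (by decide)

lemma rank_key (α : ℕ → ℕ) (m : ℕ) (hα : ∀ i < m, 0 < α i) :
    (adjMat (cographC α m) * adjMat (cographC α m) + adjMat (cographC α m)).rank ≤ m := by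
  classical
  set V := (Σ j : Fin m, Fin (α j.val)) with hV
  set A := adjMat (cographC α m) with hA
  have hAdef : ∀ u w : V, A u w = if (cographC α m).Adj u w then (1:ℝ) else 0 :=
    fun u w => rfl
  set B := A * A + A with hB
  -- off-cell columns agree
  have hoff : ∀ u v w : V, u.1 = v.1 → w.1 ≠ u.1 → A u w = A v w ∧ u ≠ w ∧ v ≠ w := by
    intro u v w huv hw
    have hne_u : u ≠ w := fun h => hw (congrArg Sigma.fst h).symm
    have hne_v : v ≠ w := fun h => hw (huv ▸ (congrArg Sigma.fst h).symm)
    refine ⟨?_, hne_u, hne_v⟩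
    have hiff : (cographC α m).Adj u w ↔ (cographC α m).Adj v w := by
      rw [cographC_adj, cographC_adj]
      have h1 : (u.1 = w.1) ↔ (v.1 = w.1) := by rw [huv]
      have h2 : max u.1.val w.1.val = max v.1.val w.1.val := by rw [huv]
      rw [h1, h2]
      tauto
    rw [hAdef, hAdef, if_congr hiff rfl rfl]
  -- on-cell adjacency
  have honn : ∀ u w : V, w.1 = u.1 →
      ((cographC α m).Adj u w ↔ u ≠ w ∧ Even (m - u.1.val)) := by
    intro u w hw
    rw [cographC_adj]
    have h2 : max u.1.val w.1.val = u.1.val := by rw [hw, max_self]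
    have h1 : u.1 = w.1 := hw.symm
    rw [h2]
    simp [h1]
  -- rows of B constant on cells
  have hrow : ∀ u v : V, u.1 = v.1 → ∀ w, B u w = B v w := by
    intro u v huv
    have hval : u.1.val = v.1.val := congrArg Fin.val huv
    by_cases hpar : Even (m - u.1.val)
    · -- clique cell : rows of A+1 equal
      have hAI : ∀ w, (A + 1) u w = (A + 1) v w := by
        intro w
        by_cases hw : w.1 = u.1
        · have h1 : (A + 1) u w = 1 := by
            simp only [Matrix.add_apply, Matrix.one_apply, hAdef, honn u w hw]
            by_cases h : u = w <;> simp [h, hpar]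
          have h2 : (A + 1) v w = 1 := by
            have hw' : w.1 = v.1 := hw.trans huv
            have hpar' : Even (m - v.1.val) := hval ▸ hpar
            simp only [Matrix.add_apply, Matrix.one_apply, hAdef, honn v w hw']
            by_cases h : v = w <;> simp [h, hpar']
          rw [h1, h2]
        · obtain ⟨hAe, hu, hv⟩ := hoff u v w huv hw
          simp only [Matrix.add_apply, Matrix.one_apply, hAe, if_neg hu, if_neg hv]
      intro w
      have hBf : B = (A + 1) * A := by rw [hB, add_mul, one_mul]
      rw [hBf, Matrix.mul_apply, Matrix.mul_apply]
      exact Finset.sum_congr rfl fun x _ => by rw [hAI x]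
    · -- independent cell : rows of A equal
      have hAr : ∀ w, A u w = A v w := by
        intro w
        by_cases hw : w.1 = u.1
        · have h1 : ¬(cographC α m).Adj u w := by rw [honn u w hw]; tauto
          have h2 : ¬(cographC α m).Adj v w := by
            have hw' : w.1 = v.1 := hw.trans huv
            have hpar' : ¬Even (m - v.1.val) := hval ▸ hpar
            rw [honn v w hw']; tauto
          rw [hAdef, hAdef, if_neg h1, if_neg h2]
        · exact (hoff u v w huv hw).1
      intro w
      have hBf : B = A * (A + 1) := by rw [hB, mul_add, mul_one]
      rw [hBf, Matrix.mul_apply, Matrix.mul_apply]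
      exact Finset.sum_congr rfl fun x _ => by rw [hAr x]
  -- factor B = E * F
  let r : Fin m → V := fun j => ⟨j, ⟨0, hα j j.isLt⟩⟩
  let E : Matrix V (Fin m) ℝ := fun u j => if u.1 = j then 1 else 0
  let F : Matrix (Fin m) V ℝ := fun j w => B (r j) w
  have hEF : B = E * F := by
    ext u w
    rw [Matrix.mul_apply]
    rw [Finset.sum_eq_single u.1]
    · simp only [E, F, if_pos rfl, one_mul]
      exact hrow u (r u.1) rfl w
    · intro j _ hj
      simp [E, Ne.symm hj]
    · intro h
      exact absurd (Finset.mem_univ _) h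
  calc B.rank = (E * F).rank := by rw [hEF]
    _ ≤ F.rank := Matrix.rank_mul_le_right E F
    _ ≤ Fintype.card (Fin m) := F.rank_le_card_height
    _ = m := Fintype.card_fin m

/-- the number of distinct real eigenvalues of a C-graph `C(α_1,…,α_{2k})`
is at most `2k + 2`. -/
theorem stmt10 (k : ℕ) (hk : 1 ≤ k) (α : ℕ → ℕ) (hα : ∀ i < 2 * k, 0 < α i) :
    (adjMat (cographC α (2 * k))).charpoly.roots.toFinset.card ≤ 2 * k + 2 := by
  classical
  have h1 := card_roots_le (adjMat (cographC α (2 * k)))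
  have h2 := rank_key α (2 * k) hα
  omega
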